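/- Consider the SD placement on an m × m grid of n = m² points whose coordinates in the split dimension at every split are all distinct. Then for every pair of points separated by a split in dimension a, the type-I constraint in dimension a holds for that pair. Consequently the number of violated type-I constraints is at most C(n,2) (only the constraints in the non-splitting dimension of each pair's separating split can be violated), giving Err_I ≤ 1/2. -/

import Mathlib

lemma fin2_eq_of_ne {a b c : Fin 2} (h1 : a ≠ c) (h2 : b ≠ c) : a = b := by
  fin_cases a <;> fin_cases b <;> fin_cases c <;> simp_all

/-- SD placement of `n = m²` points on an `m × m` grid, with the
coordinates in the split dimension distinct at every split. Each pair `i ≠ j`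
is separated by exactly one split, in dimension `d i j`, with grid-index
threshold `c i j`, the smaller-coordinate point getting indices `< c i j` and
the other `≥ c i j` in that dimension. Then the type-I constraint in the
separating dimension holds for every pair; consequently at most `C(n,2)`
type-I constraints are violated, giving `Err_I ≤ 1/2`. -/
theorem sd_grid_errI_le_half (m : ℕ) (n : ℕ) (hn : n = m ^ 2)
    (x : Fin n → Fin 2 → ℝ) (S : Fin n → Fin 2 → ℤ)
    (d : Fin n → Fin n → Fin 2) (c : Fin n → Fin n → ℤ)
    (hdsymm : ∀ i j, d i j = d j i) (hcsymm : ∀ i j, c i j = c j i)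
    (hdist : ∀ i j, i ≠ j → x i (d i j) ≠ x j (d i j))
    (hsplit : ∀ i j, i ≠ j → x i (d i j) < x j (d i j) →
      S i (d i j) < c i j ∧ c i j ≤ S j (d i j)) :
    (∀ i j, i ≠ j →
      ((x i (d i j) < x j (d i j) → S i (d i j) < S j (d i j)) ∧
       (x j (d i j) ≤ x i (d i j) → S j (d i j) ≤ S i (d i j)))) ∧
    (Finset.univ.filter (fun t : Fin n × Fin n × Fin 2 =>
        t.1 < t.2.1 ∧
        ¬ ((x t.1 t.2.2 < x t.2.1 t.2.2 → S t.1 t.2.2 < S t.2.1 t.2.2) ∧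
           (x t.2.1 t.2.2 ≤ x t.1 t.2.2 → S t.2.1 t.2.2 ≤ S t.1 t.2.2)))).card
      ≤ n.choose 2 ∧
    ((Finset.univ.filter (fun t : Fin n × Fin n × Fin 2 =>
        t.1 < t.2.1 ∧
        ¬ ((x t.1 t.2.2 < x t.2.1 t.2.2 → S t.1 t.2.2 < S t.2.1 t.2.2) ∧
           (x t.2.1 t.2.2 ≤ x t.1 t.2.2 → S t.2.1 t.2.2 ≤ S t.1 t.2.2)))).card : ℚ)
        / (2 * n.choose 2) ≤ 1 / 2 := by
  have main : ∀ i j, i ≠ j →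
      ((x i (d i j) < x j (d i j) → S i (d i j) < S j (d i j)) ∧
       (x j (d i j) ≤ x i (d i j) → S j (d i j) ≤ S i (d i j))) := by
    intro i j hij
    constructor
    · intro hx
      exact lt_of_lt_of_le (hsplit i j hij hx).1 (hsplit i j hij hx).2
    · intro hx
      have hlt : x j (d i j) < x i (d i j) :=
        lt_of_le_of_ne hx (fun h => hdist i j hij h.symm)
      have h2 := hsplit j i (Ne.symm hij)
      rw [← hdsymm i j] at h2
      have := h2 hlt
      exact le_of_lt (lt_of_lt_of_le this.1 this.2)
  refine ⟨main, ?_, ?_⟩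
  · -- cardinality bound
    have hcard : (Finset.univ.filter (fun t : Fin n × Fin n × Fin 2 =>
        t.1 < t.2.1 ∧
        ¬ ((x t.1 t.2.2 < x t.2.1 t.2.2 → S t.1 t.2.2 < S t.2.1 t.2.2) ∧
           (x t.2.1 t.2.2 ≤ x t.1 t.2.2 → S t.2.1 t.2.2 ≤ S t.1 t.2.2)))).card
      ≤ ((Finset.univ : Finset (Fin n)).powersetCard 2).card := by
      apply Finset.card_le_card_of_injOn (fun t => ({t.1, t.2.1} : Finset (Fin n)))
      · intro t ht
        simp only [Finset.mem_coe, Finset.mem_filter, Finset.mem_univ, true_and] at ht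
        simp only [Finset.mem_coe, Finset.mem_powersetCard]
        refine ⟨Finset.subset_univ _, ?_⟩
        rw [Finset.card_insert_of_notMem (by simp [ht.1.ne]), Finset.card_singleton]
      · intro t ht t' ht' heq
        simp only [Finset.mem_coe, Finset.mem_filter, Finset.mem_univ, true_and] at ht ht'
        have hpair : t.1 = t'.1 ∧ t.2.1 = t'.2.1 := by
          have hset : ({t.1, t.2.1} : Set (Fin n)) = {t'.1, t'.2.1} := by
            have := congrArg (fun s : Finset (Fin n) => (s : Set (Fin n))) heq
            simpa using this
          rw [Set.pair_eq_pair_iff] at hset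
          rcases hset with ⟨h1, h2⟩ | ⟨h1, h2⟩
          · exact ⟨h1, h2⟩
          · exfalso
            have := ht.1
            have := ht'.1
            have : t.1 < t.1 := by
              calc t.1 < t.2.1 := ht.1
                _ = t'.1 := h2
                _ < t'.2.1 := ht'.1
                _ = t.1 := h1.symm
            exact lt_irrefl _ this
        -- dims equal: both violating dims differ from d t.1 t.2.1
        have hne : t.1 ≠ t.2.1 := ne_of_lt ht.1
        have hdim : t.2.2 ≠ d t.1 t.2.1 := by
          intro h
          apply ht.2
          rw [h]
          exact main t.1 t.2.1 hne
        have hdim' : t'.2.2 ≠ d t.1 t.2.1 := by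
          intro h
          apply ht'.2
          rw [h, hpair.1, hpair.2] at *
          exact main t'.1 t'.2.1 (ne_of_lt ht'.1)
        have : t.2.2 = t'.2.2 := fin2_eq_of_ne hdim hdim'
        exact Prod.ext hpair.1 (Prod.ext hpair.2 this)
    rwa [Finset.card_powersetCard, Finset.card_univ, Fintype.card_fin] at hcard
  · -- ratio bound
    have hcard : (Finset.univ.filter (fun t : Fin n × Fin n × Fin 2 =>
        t.1 < t.2.1 ∧
        ¬ ((x t.1 t.2.2 < x t.2.1 t.2.2 → S t.1 t.2.2 < S t.2.1 t.2.2) ∧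
           (x t.2.1 t.2.2 ≤ x t.1 t.2.2 → S t.2.1 t.2.2 ≤ S t.1 t.2.2)))).card
      ≤ n.choose 2 := by
      have hcard : (Finset.univ.filter (fun t : Fin n × Fin n × Fin 2 =>
          t.1 < t.2.1 ∧
          ¬ ((x t.1 t.2.2 < x t.2.1 t.2.2 → S t.1 t.2.2 < S t.2.1 t.2.2) ∧
             (x t.2.1 t.2.2 ≤ x t.1 t.2.2 → S t.2.1 t.2.2 ≤ S t.1 t.2.2)))).card
        ≤ ((Finset.univ : Finset (Fin n)).powersetCard 2).card := by
        apply Finset.card_le_card_of_injOn (fun t => ({t.1, t.2.1} : Finset (Fin n)))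
        · intro t ht
          simp only [Finset.mem_coe, Finset.mem_filter, Finset.mem_univ, true_and] at ht
          simp only [Finset.mem_coe, Finset.mem_powersetCard]
          refine ⟨Finset.subset_univ _, ?_⟩
          rw [Finset.card_insert_of_notMem (by simp [ht.1.ne]), Finset.card_singleton]
        · intro t ht t' ht' heq
          simp only [Finset.mem_coe, Finset.mem_filter, Finset.mem_univ, true_and] at ht ht'
          have hpair : t.1 = t'.1 ∧ t.2.1 = t'.2.1 := by
            have hset : ({t.1, t.2.1} : Set (Fin n)) = {t'.1, t'.2.1} := by
              have := congrArg (fun s : Finset (Fin n) => (s : Set (Fin n))) heq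
              simpa using this
            rw [Set.pair_eq_pair_iff] at hset
            rcases hset with ⟨h1, h2⟩ | ⟨h1, h2⟩
            · exact ⟨h1, h2⟩
            · exfalso
              have : t.1 < t.1 := by
                calc t.1 < t.2.1 := ht.1
                  _ = t'.1 := h2
                  _ < t'.2.1 := ht'.1
                  _ = t.1 := h1.symm
              exact lt_irrefl _ this
          have hne : t.1 ≠ t.2.1 := ne_of_lt ht.1
          have hdim : t.2.2 ≠ d t.1 t.2.1 := by
            intro h
            apply ht.2
            rw [h]
            exact main t.1 t.2.1 hne
          have hdim' : t'.2.2 ≠ d t.1 t.2.1 := by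
            intro h
            apply ht'.2
            rw [h, hpair.1, hpair.2] at *
            exact main t'.1 t'.2.1 (ne_of_lt ht'.1)
          exact Prod.ext hpair.1 (Prod.ext hpair.2 (fin2_eq_of_ne hdim hdim'))
      rwa [Finset.card_powersetCard, Finset.card_univ, Fintype.card_fin] at hcard
    set N := (Finset.univ.filter (fun t : Fin n × Fin n × Fin 2 =>
        t.1 < t.2.1 ∧
        ¬ ((x t.1 t.2.2 < x t.2.1 t.2.2 → S t.1 t.2.2 < S t.2.1 t.2.2) ∧
           (x t.2.1 t.2.2 ≤ x t.1 t.2.2 → S t.2.1 t.2.2 ≤ S t.1 t.2.2)))).card with hN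
    rcases Nat.eq_zero_or_pos (n.choose 2) with h0 | hpos
    · have : N = 0 := Nat.le_zero.mp (h0 ▸ hcard)
      rw [this]
      norm_num
    · rw [div_le_div_iff₀ (by positivity) (by norm_num)]
      have : (N : ℚ) ≤ (n.choose 2 : ℚ) := by exact_mod_cast hcard
      linarith
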